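/- For all i ≥ 0, the finite product ∏_{j=1}^{i} 1/(1+2^{-2^j}) equals (3/4) · 1/(1 - 2^{-2^{i+1}}). -/

import Mathlib

/-- The `k`-th power of a finite word `w` (concatenation of `k` copies). -/
def wpow (w : List Bool) (k : ℕ) : List Bool := (List.replicate k w).flatten

/-- The pair of words `(u_i, v_i)`:  `u_0 = 0`, `v_0 = 1`,
`u_{i+1} = u_i^{m_i} v_i^{l_i}`, `v_{i+1} = u_i^{m_i} v_i^{n_i}`. -/
def uvSeq (l m n : ℕ → ℕ) : ℕ → List Bool × List Bool
  | 0 => ([false], [true])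
  | i + 1 =>
      (wpow (uvSeq l m n i).1 (m i) ++ wpow (uvSeq l m n i).2 (l i),
       wpow (uvSeq l m n i).1 (m i) ++ wpow (uvSeq l m n i).2 (n i))

/-- The substitution `σ_h` : `0 ↦ 0^{m_h} 1^{l_h}`, `1 ↦ 0^{m_h} 1^{n_h}`. -/
def subw (l m n : ℕ → ℕ) (h : ℕ) (w : List Bool) : List Bool :=
  w.flatMap fun c => List.replicate (m h) false ++ List.replicate (if c then n h else l h) true

/-- `wordIter i h = σ_h σ_{h+1} ⋯ σ_{h+i-1}(0)`. -/
def wordIter (l m n : ℕ → ℕ) : ℕ → ℕ → List Bool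
  | 0, _ => [false]
  | i + 1, h => subw l m n h (wordIter l m n i (h + 1))

/-- The infinite word `u^{(h)} = lim_i σ_h ⋯ σ_{h+i-1}(0)`. -/
def limWord (l m n : ℕ → ℕ) (h : ℕ) (k : ℕ) : Bool :=
  (wordIter l m n (k + 1) h).getD k false

/-- `w` is a factor of the infinite word `U`. -/
def IsFactor (U : ℕ → Bool) (w : List Bool) : Prop :=
  ∃ k, w = (List.range w.length).map fun j => U (k + j)

/-- `σ_0 σ_1 ⋯ σ_{h+i-1}` starting at `h`, applied to `w`. -/
def subComp (l m n : ℕ → ℕ) : ℕ → ℕ → List Bool → List Bool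
  | 0, _, w => w
  | i + 1, h, w => subw l m n h (subComp l m n i (h + 1) w)

/-- `\hat{σ}_h(w) = 1^{l_h} σ_h(w) 0^{m_h} 1^{l_h}`. -/
def hatw (l m n : ℕ → ℕ) (h : ℕ) (w : List Bool) : List Bool :=
  List.replicate (l h) true ++ subw l m n h w ++
    List.replicate (m h) false ++ List.replicate (l h) true

/-- `hatComp i h w = \hat{σ}_h ⋯ \hat{σ}_{h+i-1}(w)`. -/
def hatComp (l m n : ℕ → ℕ) : ℕ → ℕ → List Bool → List Bool
  | 0, _, w => w
  | i + 1, h, w => hatw l m n h (hatComp l m n i (h + 1) w)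

/-- The complexity function of the infinite word `U`. -/
noncomputable def complexityFn (U : ℕ → Bool) (nn : ℕ) : ℕ :=
  Set.ncard {w : List Bool | w.length = nn ∧ IsFactor U w}

theorem stmt0 (i : ℕ) :
    ∏ j ∈ Finset.Icc 1 i, (1 + ((2 : ℝ) ^ (2 ^ j))⁻¹)⁻¹
      = (3 / 4) * (1 - ((2 : ℝ) ^ (2 ^ (i + 1)))⁻¹)⁻¹ := by
  induction i with
  | zero => norm_num
  | succ n ih =>
      rw [Finset.prod_Icc_succ_top (by omega : 1 ≤ n + 1), ih]
      have h1 : ((2:ℝ) ^ (2 ^ (n+1))) ≠ 0 := by positivity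
      have h2 : (1 : ℝ) - ((2:ℝ) ^ (2 ^ (n+1)))⁻¹ ≠ 0 := by
        have : ((2:ℝ) ^ (2 ^ (n+1)))⁻¹ < 1 := by
          rw [inv_lt_one_iff₀]; right; exact one_lt_pow₀ (by norm_num) (by positivity)
        linarith
      have h3 : (1 : ℝ) + ((2:ℝ) ^ (2 ^ (n+1)))⁻¹ ≠ 0 := by positivity
      have h4 : (1 : ℝ) - ((2:ℝ) ^ (2 ^ (n+2)))⁻¹ ≠ 0 := by
        have : ((2:ℝ) ^ (2 ^ (n+2)))⁻¹ < 1 := by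
          rw [inv_lt_one_iff₀]; right; exact one_lt_pow₀ (by norm_num) (by positivity)
        linarith
      have key : (2:ℝ) ^ (2 ^ (n+2)) = ((2:ℝ) ^ (2 ^ (n+1)))^2 := by
        rw [← pow_mul, pow_succ]
      rw [show n + 1 + 1 = n + 2 by ring, key]
      have hx : (1:ℝ) < (2:ℝ) ^ (2 ^ (n+1)) := one_lt_pow₀ (by norm_num) (by positivity)
      generalize (2:ℝ) ^ (2 ^ (n+1)) = x at hx ⊢
      have hx1 : x - 1 ≠ 0 := by linarith
      have hx2 : x + 1 ≠ 0 := by linarith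
      have hx3 : x ^ 2 - 1 ≠ 0 := by nlinarith
      have hx0 : x ≠ 0 := by linarith
      rw [show (1:ℝ) - x⁻¹ = (x - 1) / x by field_simp,
        show (1:ℝ) + x⁻¹ = (x + 1) / x by field_simp,
        show (1:ℝ) - (x ^ 2)⁻¹ = (x ^ 2 - 1) / x ^ 2 by field_simp]
      rw [inv_div, inv_div, inv_div, mul_assoc, div_mul_div_comm]
      congr 2 <;> ring
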